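/- arXiv:2310.06192 — 4 statements merged into one kernel-verified Lean document; each statement's English description precedes it below -/
import Mathlib

section
/- (Stacking Partition Lemma, distance-based form.) Let G be a finite connected simple graph, C a configuration on G, and r a vertex with C(r) ≥ 1. Define the configuration C − r by (C − r)(r) = 0 and (C − r)(v) = C(v) for v ≠ r. Then G is (C,r)-stackable if and only if either C − r is identically zero, or there exist k ≥ 1, configurations D_1, …, D_k and vertices s_1, …, s_k of G such that: (i) the D_i have pairwise disjoint supports (for every vertex w and every i ≠ j, D_i(w) = 0 or D_j(w) = 0); (ii) each D_i is nonzero; (iii) Σ_{i=1}^k D_i = C − r; (iv) for each i, G is (D_i, s_i)-stackable; and (v) for each i, dist_G(s_i, r) = |D_i|. -/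
/-- A cup-stacking move in graph `G`: all cups from `u` are moved to `v`, where
`u ≠ v`, both have at least one cup, and `dist G u v = C u`. -/
def CupMove {V : Type*} [DecidableEq V] (G : SimpleGraph V) (C C' : V → ℕ) : Prop :=
  ∃ u v : V, u ≠ v ∧ 1 ≤ C u ∧ 1 ≤ C v ∧ G.dist u v = C u ∧
    ∀ w, C' w = if w = u then 0 else if w = v then C u + C v else C w

/-- `G` is `(C, r)`-stackable: some finite sequence of cup-stacking moves starting
from `C` reaches the configuration with all `|C|` cups on `r` and none elsewhere. -/
def IsStackableConf {V : Type*} [Fintype V] [DecidableEq V]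
    (G : SimpleGraph V) (C : V → ℕ) (r : V) : Prop :=
  Relation.ReflTransGen (CupMove G) C (fun w => if w = r then ∑ v, C v else 0)

/-- `G` is `r`-stackable: `(𝟏, r)`-stackable where `𝟏` has one cup on each vertex. -/
def IsStackableAt {V : Type*} [Fintype V] [DecidableEq V]
    (G : SimpleGraph V) (r : V) : Prop :=
  IsStackableConf G (fun _ => 1) r

/-- `G` is stackable: `r`-stackable for every vertex `r`. -/
def IsStackable {V : Type*} [Fintype V] [DecidableEq V] (G : SimpleGraph V) : Prop :=
  ∀ r : V, IsStackableAt G r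

section Helpers
variable {V : Type*} [Fintype V] [DecidableEq V] {G : SimpleGraph V}

lemma sum_split {k : ℕ} (i0 : Fin k) (f : Fin k → ℕ) :
    ∑ i, f i = f i0 + ∑ i, if i = i0 then 0 else f i := by
  have h1 : ∀ i, f i = (if i = i0 then f i0 else 0) + (if i = i0 then 0 else f i) := by
    intro i; by_cases h : i = i0 <;> simp [h]
  rw [Finset.sum_congr rfl fun i _ => h1 i, Finset.sum_add_distrib]
  simp [Finset.sum_ite_eq']

lemma cupMove_sum {A B : V → ℕ} (h : CupMove G A B) : ∑ v, B v = ∑ v, A v := by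
  obtain ⟨u, v, huv, hu, hv, hd, hB⟩ := h
  have key : ∀ w, B w + (if w = u then A u else 0) = A w + (if w = v then A u else 0) := by
    intro w
    rw [hB w]
    by_cases h1 : w = u
    · subst h1; simp [huv]
    · by_cases h2 : w = v <;> simp [h1, h2, Ne.symm huv] <;> omega
  have h1 : ∑ w, (B w + if w = u then A u else 0) = ∑ w, (A w + if w = v then A u else 0) :=
    Finset.sum_congr rfl fun w _ => key w
  simp only [Finset.sum_add_distrib, Finset.sum_ite_eq', Finset.mem_univ, if_pos] at h1
  omega

lemma rtg_sum {A B : V → ℕ} (h : Relation.ReflTransGen (CupMove G) A B) :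
    ∑ v, B v = ∑ v, A v := by
  induction h with
  | refl => rfl
  | tail _ hbc ih => rw [cupMove_sum hbc, ih]

lemma cupMove_zero {A B : V → ℕ} (r : V) (h : CupMove G A B) (hA : A r = 0) : B r = 0 := by
  obtain ⟨u, v, huv, hu, hv, hd, hB⟩ := h
  rw [hB r]
  have h1 : r ≠ u := fun h => by subst h; omega
  have h2 : r ≠ v := fun h => by subst h; omega
  simp [h1, h2, hA]

lemma rtg_zero {A B : V → ℕ} (r : V) (h : Relation.ReflTransGen (CupMove G) A B)
    (hA : A r = 0) : B r = 0 := by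
  induction h with
  | refl => exact hA
  | tail _ hbc ih => exact cupMove_zero r hbc ih

lemma cupMove_supp {A B : V → ℕ} (h : CupMove G A B) {w : V} (hw : B w ≠ 0) : A w ≠ 0 := by
  obtain ⟨u, v, huv, hu, hv, hd, hB⟩ := h
  rw [hB w] at hw
  by_cases h1 : w = u
  · simp [h1] at hw
  · by_cases h2 : w = v
    · subst h2; omega
    · simpa [h1, h2] using hw

lemma rtg_supp {A B : V → ℕ} (h : Relation.ReflTransGen (CupMove G) A B)
    {w : V} (hw : B w ≠ 0) : A w ≠ 0 := by
  induction h with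
  | refl => exact hw
  | tail _ hbc ih => exact ih (cupMove_supp hbc hw)

lemma rtg_lift {A A' : V → ℕ} (h : Relation.ReflTransGen (CupMove G) A A') :
    ∀ B : V → ℕ, (∀ w, A w ≠ 0 → B w = 0) →
      Relation.ReflTransGen (CupMove G) (fun w => A w + B w) (fun w => A' w + B w) := by
  induction h using Relation.ReflTransGen.head_induction_on with
  | refl => intro B _; exact .refl
  | head hstep htail ih =>
    rename_i a c
    intro B hB
    obtain ⟨u, v, huv, hu, hv, hd, hc⟩ := hstep
    have hBu : B u = 0 := hB u (by omega)
    have hBv : B v = 0 := hB v (by omega)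
    refine Relation.ReflTransGen.head
      ⟨u, v, huv, by show 1 ≤ a u + B u; omega, by show 1 ≤ a v + B v; omega,
        by show G.dist u v = a u + B u; omega, ?_⟩
      (ih B fun w hw => hB w (cupMove_supp ⟨u, v, huv, hu, hv, hd, hc⟩ hw))
    intro w
    show c w + B w = _
    rw [hc w]
    by_cases h1 : w = u
    · subst h1; simp [huv, hBu]
    · by_cases h2 : w = v <;> simp [h1, h2, Ne.symm huv] <;> omega

end Helpers

def PartExists {V : Type*} [Fintype V] [DecidableEq V]
    (G : SimpleGraph V) (C : V → ℕ) (r : V) : Prop :=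
  ∃ k : ℕ, 1 ≤ k ∧ ∃ (D : Fin k → V → ℕ) (s : Fin k → V),
    (∀ w : V, ∀ i j : Fin k, i ≠ j → D i w = 0 ∨ D j w = 0) ∧
    (∀ i : Fin k, ∃ w : V, D i w ≠ 0) ∧
    (∀ w : V, ∑ i, D i w = if w = r then 0 else C w) ∧
    (∀ i : Fin k, IsStackableConf G (D i) (s i)) ∧
    (∀ i : Fin k, G.dist (s i) r = ∑ w, D i w)

section Main
variable {V : Type*} [Fintype V] [DecidableEq V] {G : SimpleGraph V}

lemma forward (r : V) (N : ℕ) (C : V → ℕ)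
    (h : Relation.ReflTransGen (CupMove G) C (fun w => if w = r then N else 0)) :
    1 ≤ C r → ((∀ v : V, v ≠ r → C v = 0) ∨ PartExists G C r) := by
  induction h using Relation.ReflTransGen.head_induction_on with
  | refl => exact fun _ => Or.inl (fun v hv => by simp [hv])
  | head hstep htail ih =>
    rename_i a c
    intro har
    obtain ⟨u, v, huv, hu, hv, hd, hc⟩ := hstep
    -- sum is preserved; target value at r is N
    have hcu : c u = 0 := by rw [hc u]; simp
    have hcv : c v = a u + a v := by rw [hc v]; simp [Ne.symm huv]
    have hcw : ∀ w, w ≠ u → w ≠ v → c w = a w := by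
      intro w h1 h2; rw [hc w]; simp [h1, h2]
    by_cases hur : u = r
    · -- impossible: r would be emptied forever
      exfalso
      subst hur
      have hcr : c u = 0 := hcu
      have hNr : (if u = u then N else 0) = 0 := rtg_zero u htail hcr
      have hN : N = 0 := by simpa using hNr
      have hsumc : ∑ w, c w = 0 := by
        simpa [hN] using (rtg_sum htail).symm
      have : c v = 0 := by
        have := Finset.sum_eq_zero_iff.mp hsumc v (Finset.mem_univ v)
        exact this
      omega
    · by_cases hvr : v = r
      · -- cups moved onto r
        subst hvr
        have hcr : 1 ≤ c v := by omega
        rcases ih hcr with hz | ⟨k, hk, D', s', hdisj', hne', hsum', hst', hdist'⟩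
        · -- c is zero off v: single part, the pile at u
          right
          refine ⟨1, le_refl 1, fun _ w => if w = u then a u else 0, fun _ => u, ?_, ?_, ?_, ?_, ?_⟩
          · intro w i j hij
            exact absurd (Subsingleton.elim i j) hij
          · intro i; exact ⟨u, by simp; omega⟩
          · intro w
            rw [Fin.sum_univ_one]
            by_cases h1 : w = v
            · subst h1; simp [Ne.symm huv]
            · by_cases h2 : w = u
              · simp [h2, h1, hur]
              · have e1 := hz w h1
                have e2 := hcw w h2 h1
                simp only [h1, h2, if_neg]
                simp [h1, h2]
                omega
          · intro i
            show Relation.ReflTransGen (CupMove G) (fun w => if w = u then a u else 0)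
              (fun w => if w = u then ∑ x, (if x = u then a u else 0) else 0)
            have heq : (fun w => if w = u then ∑ x, (if x = u then a u else 0) else 0)
                = (fun w => if w = u then a u else 0) := by
              funext w
              by_cases h1 : w = u <;> simp [h1, Finset.sum_ite_eq']
            rw [heq]
          · intro i
            show G.dist u v = _
            simp [Finset.sum_ite_eq']
            omega
        · -- extend the partition with a new part at u
          right
          have hDu : ∀ i, D' i u = 0 := by
            intro i
            have h1 : ∑ i, D' i u = 0 := by rw [hsum' u]; simp [huv, hcu]
            exact Finset.sum_eq_zero_iff.mp h1 i (Finset.mem_univ i)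
          refine ⟨k + 1, by omega, Fin.snoc D' (fun w => if w = u then a u else 0),
            Fin.snoc s' u, ?_, ?_, ?_, ?_, ?_⟩
          · intro w i j hij
            induction i using Fin.lastCases with
            | last =>
              induction j using Fin.lastCases with
              | last => exact absurd rfl hij
              | cast j' =>
                simp only [Fin.snoc_last, Fin.snoc_castSucc]
                by_cases h1 : w = u
                · subst h1; exact Or.inr (hDu j')
                · exact Or.inl (by simp [h1])
            | cast i' =>
              induction j using Fin.lastCases with
              | last =>
                simp only [Fin.snoc_last, Fin.snoc_castSucc]
                by_cases h1 : w = u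
                · subst h1; exact Or.inl (hDu i')
                · exact Or.inr (by simp [h1])
              | cast j' =>
                simp only [Fin.snoc_castSucc]
                exact hdisj' w i' j' (by simpa using hij)
          · intro i
            induction i using Fin.lastCases with
            | last => exact ⟨u, by simp; omega⟩
            | cast i' => simpa using hne' i'
          · intro w
            rw [Fin.sum_univ_castSucc]
            simp only [Fin.snoc_last, Fin.snoc_castSucc]
            rw [hsum' w]
            by_cases h1 : w = v
            · subst h1; simp [Ne.symm huv]
            · by_cases h2 : w = u
              · subst h2; simp [h1, hcu]
              · simp [h1, h2, hcw w h2 h1]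
          · intro i
            induction i using Fin.lastCases with
            | last =>
              simp only [IsStackableConf, Fin.snoc_last]
              have heq : (fun w => if w = u then ∑ x, (if x = u then a u else 0) else 0)
                  = (fun w => if w = u then a u else 0) := by
                funext w
                by_cases h1 : w = u <;> simp [h1, Finset.sum_ite_eq']
              rw [heq]
            | cast i' =>
              simp only [IsStackableConf, Fin.snoc_castSucc]
              exact hst' i'
          · intro i
            induction i using Fin.lastCases with
            | last =>
              simp only [Fin.snoc_last, Finset.sum_ite_eq', Finset.mem_univ, if_pos]
              omega
            | cast i' => simpa using hdist' i'
      · -- move between two non-r vertices: split the merged pile back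
        have hcr : 1 ≤ c r := by rw [hcw r (Ne.symm hur) (Ne.symm hvr)]; omega
        rcases ih hcr with hz | ⟨k, hk, D', s', hdisj', hne', hsum', hst', hdist'⟩
        · exfalso
          have := hz v hvr
          omega
        · right
          have hvpos : 0 < ∑ i, D' i v := by rw [hsum' v]; simp [hvr]; omega
          have hex : ∃ i0, D' i0 v ≠ 0 := by
            by_contra hno
            push_neg at hno
            rw [Finset.sum_eq_zero (fun i _ => hno i)] at hvpos
            omega
          obtain ⟨i0, hi0⟩ := hex
          have hDu : ∀ i, D' i u = 0 := by
            intro i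
            have h1 : ∑ i, D' i u = 0 := by rw [hsum' u]; simp [hur, hcu]
            exact Finset.sum_eq_zero_iff.mp h1 i (Finset.mem_univ i)
          have hDjv : ∀ j, j ≠ i0 → D' j v = 0 := by
            intro j hj
            rcases hdisj' v j i0 hj with h | h
            · exact h
            · exact absurd h hi0
          have hDv : D' i0 v = a u + a v := by
            have h1 : ∑ i, D' i v = c v := by rw [hsum' v]; simp [hvr]
            rw [sum_split i0] at h1
            have h2 : ∑ i, (if i = i0 then 0 else D' i v) = 0 :=
              Finset.sum_eq_zero (fun i _ => by
                by_cases h : i = i0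
                · simp [h]
                · simp [h, hDjv i h])
            omega
          set Dnew : V → ℕ := fun w => if w = u then a u else if w = v then a v else D' i0 w
            with hDnew
          have hstep0 : CupMove G Dnew (D' i0) := by
            refine ⟨u, v, huv, ?_, ?_, ?_, ?_⟩
            · show 1 ≤ Dnew u; simp [hDnew]; omega
            · show 1 ≤ Dnew v; simp [hDnew, Ne.symm huv]; omega
            · show G.dist u v = Dnew u; simp [hDnew]; omega
            · intro w
              by_cases h1 : w = u
              · simp [hDnew, h1, hDu]
              · by_cases h2 : w = v
                · simp [hDnew, h2, Ne.symm huv, hDv]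
                · simp [hDnew, h1, h2]
          have hsumEq : ∑ w, D' i0 w = ∑ w, Dnew w := cupMove_sum hstep0
          refine ⟨k, hk, fun i => if i = i0 then Dnew else D' i, s', ?_, ?_, ?_, ?_, ?_⟩
          · intro w i j hij
            by_cases h1 : i = i0 <;> by_cases h2 : j = i0
            · exact absurd (h1.trans h2.symm) hij
            · simp only [if_pos h1, if_neg h2]
              by_cases hw1 : w = u
              · exact Or.inr (by rw [hw1]; exact hDu j)
              · by_cases hw2 : w = v
                · exact Or.inr (by rw [hw2]; exact hDjv j h2)
                · rcases hdisj' w i0 j (fun h => h2 h.symm) with h | h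
                  · exact Or.inl (by simp [hDnew, hw1, hw2, h])
                  · exact Or.inr h
            · simp only [if_pos h2, if_neg h1]
              by_cases hw1 : w = u
              · exact Or.inl (by rw [hw1]; exact hDu i)
              · by_cases hw2 : w = v
                · exact Or.inl (by rw [hw2]; exact hDjv i h1)
                · rcases hdisj' w i i0 h1 with h | h
                  · exact Or.inl h
                  · exact Or.inr (by simp [hDnew, hw1, hw2, h])
            · simp only [if_neg h1, if_neg h2]
              exact hdisj' w i j hij
          · intro i
            by_cases h1 : i = i0
            · exact ⟨u, by simp [h1, hDnew]; omega⟩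
            · simpa [h1] using hne' i
          · intro w
            have hsplit1 : ∑ i, (if i = i0 then Dnew w else D' i w)
                = Dnew w + ∑ i, (if i = i0 then 0 else D' i w) := by
              rw [sum_split i0]
              simp only [if_pos rfl]
              congr 1
              refine Finset.sum_congr rfl fun i _ => ?_
              by_cases h : i = i0 <;> simp [h]
            have hsplit2 : ∑ i, D' i w = D' i0 w + ∑ i, (if i = i0 then 0 else D' i w) :=
              sum_split i0 _
            have hgoal : ∑ i, (if i = i0 then Dnew else D' i) w
                = ∑ i, (if i = i0 then Dnew w else D' i w) := by
              refine Finset.sum_congr rfl fun i _ => ?_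
              by_cases h : i = i0 <;> simp [h]
            rw [hgoal, hsplit1]
            rw [hsum' w] at hsplit2
            by_cases h1 : w = r
            · have hwu : w ≠ u := by rw [h1]; exact Ne.symm hur
              have hwv : w ≠ v := by rw [h1]; exact Ne.symm hvr
              simp only [if_pos h1] at hsplit2 ⊢
              have hD : Dnew w = D' i0 w := by simp [hDnew, hwu, hwv]
              omega
            · simp only [if_neg h1] at hsplit2 ⊢
              by_cases h2 : w = u
              · have hD : Dnew w = a u := by simp [hDnew, h2]
                have hcu' : c w = 0 := by rw [h2]; exact hcu
                have haw : a w = a u := by rw [h2]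
                omega
              · by_cases h3 : w = v
                · have hD : Dnew w = a v := by simp [hDnew, h3, Ne.symm huv]
                  have hcv' : c w = a u + a v := by rw [h3]; exact hcv
                  have hDv' : D' i0 w = a u + a v := by rw [h3]; exact hDv
                  have haw : a w = a v := by rw [h3]
                  omega
                · have hD : Dnew w = D' i0 w := by simp [hDnew, h2, h3]
                  have hcw' : c w = a w := hcw w h2 h3
                  omega
          · intro i
            simp only [IsStackableConf]
            by_cases h1 : i = i0
            · simp only [h1, eq_self_iff_true, if_true]
              have htgt : ∑ x, Dnew x = ∑ x, D' i0 x := hsumEq.symm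
              rw [htgt]
              exact Relation.ReflTransGen.head hstep0 (hst' i0)
            · simp only [if_neg h1]
              exact hst' i
          · intro i
            by_cases h1 : i = i0
            · simp only [h1, eq_self_iff_true, if_true]
              rw [← hsumEq]
              exact hdist' i0
            · simp only [if_neg h1]
              exact hdist' i

end Main

section Back
variable {V : Type*} [Fintype V] [DecidableEq V] {G : SimpleGraph V}

lemma backward (r : V) (C : V → ℕ) (hr : 1 ≤ C r) (h : PartExists G C r) :
    IsStackableConf G C r := by
  obtain ⟨k, hk, D, s, hdisj, hne, hsum, hst, hdist⟩ := h
  have hDr : ∀ i, D i r = 0 := by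
    intro i
    have h1 : ∑ i, D i r = 0 := by rw [hsum r]; simp
    exact Finset.sum_eq_zero_iff.mp h1 i (Finset.mem_univ i)
  have hpos : ∀ i, 1 ≤ ∑ w, D i w := by
    intro i
    obtain ⟨w, hw⟩ := hne i
    have := Finset.single_le_sum (f := D i) (fun x _ => Nat.zero_le _) (Finset.mem_univ w)
    omega
  have hsner : ∀ i, s i ≠ r := by
    intro i hsi
    have h1 := hdist i
    rw [hsi, SimpleGraph.dist_self] at h1
    have := hpos i
    omega
  have hsupp : ∀ i, D i (s i) ≠ 0 := by
    intro i
    refine rtg_supp (hst i) (w := s i) ?_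
    show ¬ (if s i = s i then ∑ v, D i v else 0) = 0
    rw [if_pos rfl]
    have := hpos i
    omega
  have hss : ∀ i j, i ≠ j → s i ≠ s j := by
    intro i j hij hsij
    rcases hdisj (s i) i j hij with h1 | h1
    · exact hsupp i h1
    · rw [hsij] at h1
      exact hsupp j h1
  set P : Fin k → V → ℕ := fun i w => if w = s i then ∑ x, D i x else 0 with hP
  set T : ℕ → V → ℕ :=
    fun m w => (if w = r then C r else 0) +
      ∑ i : Fin k, (if (i : ℕ) < m then P i w else D i w) with hT
  have claimA : ∀ m, m ≤ k → Relation.ReflTransGen (CupMove G) C (T m) := by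
    intro m
    induction m with
    | zero =>
      intro _
      have hT0 : T 0 = C := by
        funext w
        simp only [hT, Nat.not_lt_zero, if_false]
        rw [show (∑ i, D i w) = if w = r then 0 else C w from hsum w]
        by_cases h1 : w = r <;> simp [h1]
      rw [hT0]
    | succ m ihm =>
      intro hmk
      have hm : m < k := by omega
      set i0 : Fin k := ⟨m, hm⟩ with hi0
      have hvl : (i0 : ℕ) = m := rfl
      set B : V → ℕ :=
        fun w => (if w = r then C r else 0) +
          ∑ i : Fin k, (if i = i0 then 0 else if (i : ℕ) < m then P i w else D i w) with hB
      have hBcond : ∀ w, D i0 w ≠ 0 → B w = 0 := by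
        intro w hw
        have hwr : w ≠ r := fun hh => hw (hh ▸ hDr i0)
        simp only [hB, if_neg hwr, zero_add]
        refine Finset.sum_eq_zero fun i _ => ?_
        by_cases h1 : i = i0
        · simp [h1]
        · rw [if_neg h1]
          by_cases h2 : (i : ℕ) < m
          · rw [if_pos h2]
            simp only [hP]
            by_cases h3 : w = s i
            · exfalso
              rcases hdisj w i i0 h1 with h4 | h4
              · rw [h3] at h4
                exact hsupp i h4
              · exact hw h4
            · simp [h3]
          · rw [if_neg h2]
            rcases hdisj w i i0 h1 with h4 | h4
            · exact h4
            · exact absurd h4 hw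
      have hTm : T m = fun w => D i0 w + B w := by
        funext w
        simp only [hT, hB]
        rw [sum_split i0 (fun i => if (i : ℕ) < m then P i w else D i w)]
        have : (if ((i0 : ℕ) < m) then P i0 w else D i0 w) = D i0 w := by
          rw [if_neg (by omega)]
        rw [this]
        omega
      have hTm1 : T (m + 1) = fun w => P i0 w + B w := by
        funext w
        simp only [hT, hB]
        rw [sum_split i0 (fun i => if (i : ℕ) < m + 1 then P i w else D i w)]
        have h1 : (if ((i0 : ℕ) < m + 1) then P i0 w else D i0 w) = P i0 w := by
          rw [if_pos (by omega)]
        rw [h1]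
        have h2 : ∑ i : Fin k, (if i = i0 then 0 else if (i : ℕ) < m + 1 then P i w else D i w)
            = ∑ i : Fin k, (if i = i0 then 0 else if (i : ℕ) < m then P i w else D i w) := by
          refine Finset.sum_congr rfl fun i _ => ?_
          by_cases h3 : i = i0
          · simp [h3]
          · rw [if_neg h3, if_neg h3]
            have : (i : ℕ) ≠ m := fun hh => h3 (Fin.ext hh)
            by_cases h4 : (i : ℕ) < m
            · rw [if_pos h4, if_pos (by omega)]
            · rw [if_neg h4, if_neg (by omega)]
        rw [h2]
        omega
      have hlift := rtg_lift (hst i0) B hBcond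
      have htgt : (fun w => (fun w => if w = s i0 then ∑ x, D i0 x else 0) w + B w)
          = fun w => P i0 w + B w := by
        funext w; simp only [hP]
      rw [htgt] at hlift
      rw [← hTm] at hlift
      rw [← hTm1] at hlift
      exact (ihm (by omega)).trans hlift
  -- Phase 2
  set U : ℕ → V → ℕ :=
    fun m w => (if w = r then C r + ∑ i : Fin k, (if (i : ℕ) < m then ∑ x, D i x else 0)
        else 0) +
      ∑ i : Fin k, (if (i : ℕ) < m then 0 else P i w) with hU
  have hUT : U 0 = T k := by
    funext w
    simp only [hU, hT, Nat.not_lt_zero, if_false]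
    have h1 : ∑ i : Fin k, (if (i : ℕ) < k then P i w else D i w) = ∑ i, P i w :=
      Finset.sum_congr rfl fun i _ => by rw [if_pos i.isLt]
    rw [h1]
    by_cases h2 : w = r <;> simp [h2]
  have claimB : ∀ m, m ≤ k → Relation.ReflTransGen (CupMove G) (U 0) (U m) := by
    intro m
    induction m with
    | zero => intro _; exact Relation.ReflTransGen.refl
    | succ m ihm =>
      intro hmk
      have hm : m < k := by omega
      set i0 : Fin k := ⟨m, hm⟩ with hi0
      have hvl : (i0 : ℕ) = m := rfl
      have hsumP : ∀ w, w ≠ s i0 →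
          ∑ i : Fin k, (if (i : ℕ) < m then 0 else P i w) =
          ∑ i : Fin k, (if (i : ℕ) < m + 1 then 0 else P i w) := by
        intro w hw
        refine Finset.sum_congr rfl fun i _ => ?_
        by_cases h3 : i = i0
        · rw [h3]
          rw [if_neg (by omega), if_pos (by omega)]
          simp only [hP]
          rw [if_neg hw]
        · have : (i : ℕ) ≠ m := fun hh => h3 (Fin.ext hh)
          by_cases h4 : (i : ℕ) < m
          · rw [if_pos h4, if_pos (by omega)]
          · rw [if_neg h4, if_neg (by omega)]
      have hPother : ∀ i, i ≠ i0 → P i (s i0) = 0 := by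
        intro i hi
        simp only [hP]
        rw [if_neg (hss i0 i (fun hh => hi (Eq.symm hh)))]
      have hUsi0 : U m (s i0) = ∑ x, D i0 x := by
        simp only [hU, if_neg (hsner i0)]
        rw [sum_split i0 (fun i => if (i : ℕ) < m then 0 else P i (s i0))]
        rw [if_neg (by omega : ¬ ((i0 : ℕ) < m))]
        have h1 : ∑ i : Fin k, (if i = i0 then 0 else if (i : ℕ) < m then 0 else P i (s i0)) = 0 := by
          refine Finset.sum_eq_zero fun i _ => ?_
          by_cases h3 : i = i0
          · simp [h3]
          · rw [if_neg h3]
            by_cases h4 : (i : ℕ) < m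
            · rw [if_pos h4]
            · rw [if_neg h4]
              exact hPother i h3
        rw [h1]
        have : P i0 (s i0) = ∑ x, D i0 x := by simp [hP]
        omega
      have hUr : U m r = C r + ∑ i : Fin k, (if (i : ℕ) < m then ∑ x, D i x else 0) := by
        simp only [hU, eq_self_iff_true, if_true]
        have h1 : ∑ i : Fin k, (if (i : ℕ) < m then 0 else P i r) = 0 := by
          refine Finset.sum_eq_zero fun i _ => ?_
          by_cases h4 : (i : ℕ) < m
          · rw [if_pos h4]
          · rw [if_neg h4]
            simp only [hP]
            rw [if_neg (Ne.symm (hsner i))]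
        rw [h1]
        omega
      have hmove : CupMove G (U m) (U (m + 1)) := by
        refine ⟨s i0, r, hsner i0, ?_, ?_, ?_, ?_⟩
        · rw [hUsi0]; exact hpos i0
        · rw [hUr]; omega
        · rw [hUsi0]; exact hdist i0
        · intro w
          by_cases h1 : w = s i0
          · rw [if_pos h1, h1]
            simp only [hU, if_neg (hsner i0), zero_add]
            refine Finset.sum_eq_zero fun i _ => ?_
            by_cases h3 : i = i0
            · rw [h3, if_pos (by omega)]
            · have : (i : ℕ) ≠ m := fun hh => h3 (Fin.ext hh)
              by_cases h4 : (i : ℕ) < m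
              · rw [if_pos (by omega)]
              · rw [if_neg (by omega)]
                exact hPother i h3
          · rw [if_neg h1]
            by_cases h2 : w = r
            · rw [if_pos h2, h2, hUsi0, hUr]
              simp only [hU, eq_self_iff_true, if_true]
              have h3 : ∑ i : Fin k, (if (i : ℕ) < m + 1 then 0 else P i r) = 0 := by
                refine Finset.sum_eq_zero fun i _ => ?_
                by_cases h4 : (i : ℕ) < m + 1
                · rw [if_pos h4]
                · rw [if_neg h4]
                  simp only [hP]
                  rw [if_neg (Ne.symm (hsner i))]
              rw [h3]
              rw [sum_split i0 (fun i => if (i : ℕ) < m + 1 then ∑ x, D i x else 0)]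
              rw [sum_split i0 (fun i => if (i : ℕ) < m then ∑ x, D i x else 0)]
              rw [if_pos (by omega : (i0 : ℕ) < m + 1), if_neg (by omega : ¬ ((i0 : ℕ) < m))]
              have h4 : ∑ i : Fin k, (if i = i0 then 0 else if (i : ℕ) < m + 1 then ∑ x, D i x else 0)
                  = ∑ i : Fin k, (if i = i0 then 0 else if (i : ℕ) < m then ∑ x, D i x else 0) := by
                refine Finset.sum_congr rfl fun i _ => ?_
                by_cases h3 : i = i0
                · simp [h3]
                · rw [if_neg h3, if_neg h3]
                  have : (i : ℕ) ≠ m := fun hh => h3 (Fin.ext hh)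
                  by_cases h4 : (i : ℕ) < m
                  · rw [if_pos h4, if_pos (by omega)]
                  · rw [if_neg h4, if_neg (by omega)]
              rw [h4]
              omega
            · simp only [hU, if_neg h2, zero_add]
              rw [hsumP w h1]
        
      exact (ihm (by omega)).trans (Relation.ReflTransGen.single hmove)
  have hUk : U k = fun w => if w = r then ∑ v, C v else 0 := by
    funext w
    simp only [hU]
    have h1 : ∑ i : Fin k, (if (i : ℕ) < k then (0:ℕ) else P i w) = 0 :=
      Finset.sum_eq_zero fun i _ => by rw [if_pos i.isLt]
    rw [h1]
    have h2 : ∑ i : Fin k, (if (i : ℕ) < k then ∑ x, D i x else 0) = ∑ i, ∑ x, D i x :=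
      Finset.sum_congr rfl fun i _ => by rw [if_pos i.isLt]
    rw [h2]
    have h3 : ∑ v, C v = C r + ∑ i : Fin k, ∑ x, D i x := by
      have h4 : ∀ v, C v = (if v = r then C v else 0) + (if v = r then 0 else C v) := by
        intro v; by_cases h : v = r <;> simp [h]
      rw [Finset.sum_congr rfl fun v _ => h4 v, Finset.sum_add_distrib]
      have h5 : ∑ v, (if v = r then C v else 0) = C r := by
        simp [Finset.sum_ite_eq']
      have h6 : ∑ v, (if v = r then (0:ℕ) else C v) = ∑ i : Fin k, ∑ x, D i x := by
        rw [Finset.sum_comm]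
        refine Finset.sum_congr rfl fun v _ => ?_
        rw [hsum v]
      rw [h5, h6]
    by_cases h7 : w = r <;> simp [h7, h3]
  show Relation.ReflTransGen (CupMove G) C _
  rw [← hUk]
  exact (claimA k (le_refl k)).trans (hUT ▸ claimB k (le_refl k))

end Back

theorem stacking_partition_lemma {V : Type*} [Fintype V] [DecidableEq V]
    (G : SimpleGraph V) (hG : G.Connected) (C : V → ℕ) (r : V) (hr : 1 ≤ C r) :
    IsStackableConf G C r ↔
      ((∀ v : V, v ≠ r → C v = 0) ∨
        ∃ k : ℕ, 1 ≤ k ∧ ∃ (D : Fin k → V → ℕ) (s : Fin k → V),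
          (∀ w : V, ∀ i j : Fin k, i ≠ j → D i w = 0 ∨ D j w = 0) ∧
          (∀ i : Fin k, ∃ w : V, D i w ≠ 0) ∧
          (∀ w : V, ∑ i, D i w = if w = r then 0 else C w) ∧
          (∀ i : Fin k, IsStackableConf G (D i) (s i)) ∧
          (∀ i : Fin k, G.dist (s i) r = ∑ w, D i w)) := by
  constructor
  · intro h
    exact forward r (∑ v, C v) C h hr
  · intro h
    rcases h with hz | hpart
    · have hCeq : C = fun w => if w = r then ∑ v, C v else 0 := by
        funext w
        by_cases h1 : w = r
        · rw [h1, if_pos rfl]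
          exact (Finset.sum_eq_single_of_mem r (Finset.mem_univ r)
            (fun b _ hb => hz b hb)).symm
        · rw [if_neg h1]
          exact hz w h1
      show Relation.ReflTransGen (CupMove G) C (fun w => if w = r then ∑ v, C v else 0)
      conv_lhs => rw [hCeq]
    · exact backward r C hr hpart
end

section
/- For every n ≥ 1, the path P_n on n vertices is stackable. -/
open SimpleGraph

lemma pathGraph_exists_walk (n k : ℕ) : ∀ (u v : Fin n), u.val + k = v.val →
    ∃ p : (pathGraph n).Walk u v, p.length = k := by
  induction k with
  | zero => intro u v h
            have : u = v := Fin.ext (by omega)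
            subst this; exact ⟨Walk.nil, rfl⟩
  | succ k ih =>
    intro u v h
    have hu' : u.val + 1 < n := by omega
    set u' : Fin n := ⟨u.val + 1, hu'⟩ with hu'def
    have hadj : (pathGraph n).Adj u u' := by
      rw [pathGraph_adj]; left; rfl
    obtain ⟨p, hp⟩ := ih u' v (by simp [hu'def]; omega)
    exact ⟨Walk.cons hadj p, by simp [hp]⟩

lemma pathGraph_walk_le (n : ℕ) : ∀ (u v : Fin n) (p : (pathGraph n).Walk u v),
    Nat.dist u.val v.val ≤ p.length := by
  intro u v p
  induction p with
  | nil => simp [Nat.dist_self]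
  | @cons a b c h p ih =>
    have h1 : Nat.dist a.val b.val = 1 := by
      rw [pathGraph_adj] at h
      rcases h with h | h <;> simp [Nat.dist] <;> omega
    calc Nat.dist a.val c.val ≤ Nat.dist a.val b.val + Nat.dist b.val c.val :=
          Nat.dist.triangle_inequality _ _ _
      _ ≤ 1 + p.length := by rw [h1]; omega
      _ = (Walk.cons h p).length := by simp [Nat.add_comm]

lemma pathGraph_dist (n : ℕ) (u v : Fin n) :
    (pathGraph n).dist u v = Nat.dist u.val v.val := by
  rcases Nat.le_total u.val v.val with h | h
  · obtain ⟨p, hp⟩ := pathGraph_exists_walk n (v.val - u.val) u v (by omega)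
    have h1 := SimpleGraph.dist_le p
    have h2 : Nat.dist u.val v.val = v.val - u.val := Nat.dist_eq_sub_of_le h
    have h4 : (pathGraph n).Reachable u v := ⟨p⟩
    obtain ⟨q, hq⟩ := h4.exists_walk_length_eq_dist
    have h5 := pathGraph_walk_le n u v q
    omega
  · obtain ⟨p, hp⟩ := pathGraph_exists_walk n (u.val - v.val) v u (by omega)
    have h1 := SimpleGraph.dist_le p.reverse
    have h2 : Nat.dist u.val v.val = u.val - v.val := by
      rw [Nat.dist_comm]; exact Nat.dist_eq_sub_of_le h
    have h4 : (pathGraph n).Reachable u v := ⟨p.reverse⟩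
    obtain ⟨q, hq⟩ := h4.exists_walk_length_eq_dist
    have h3 := pathGraph_walk_le n u v q
    simp at h1
    omega

lemma seg_stack (n : ℕ) (ℓ : ℕ) : ∀ (a b : Fin n) (C : Fin n → ℕ),
    a.val + ℓ = b.val →
    (∀ i : Fin n, a.val ≤ i.val → i.val ≤ b.val → C i = 1) →
    Relation.ReflTransGen (CupMove (pathGraph n)) C
      (fun i => if i = b then ℓ + 1 else if a.val ≤ i.val ∧ i.val ≤ b.val then 0 else C i) ∧
    Relation.ReflTransGen (CupMove (pathGraph n)) C
      (fun i => if i = a then ℓ + 1 else if a.val ≤ i.val ∧ i.val ≤ b.val then 0 else C i) := by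
  induction ℓ with
  | zero =>
    intro a b C hab hC
    have hba : a = b := Fin.ext (by omega)
    subst hba
    have key : (fun i => if i = a then 0 + 1
        else if a.val ≤ i.val ∧ i.val ≤ a.val then 0 else C i) = C := by
      funext i
      by_cases h : i = a
      · have hv : i.val = a.val := congrArg Fin.val h
        rw [if_pos h, hC i (by omega) (by omega)]
      · have hv : i.val ≠ a.val := fun hh => h (Fin.ext hh)
        rw [if_neg h, if_neg (by omega : ¬(a.val ≤ i.val ∧ i.val ≤ a.val))]
    rw [key]
    exact ⟨Relation.ReflTransGen.refl, Relation.ReflTransGen.refl⟩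
  | succ ℓ ih =>
    intro a b C hab hC
    have hbn : b.val < n := b.isLt
    constructor
    · -- stack at the right endpoint b
      obtain ⟨b', hb'⟩ : ∃ b' : Fin n, b'.val = a.val + ℓ := ⟨⟨a.val + ℓ, by omega⟩, rfl⟩
      have hC' : ∀ i : Fin n, a.val ≤ i.val → i.val ≤ b'.val → C i = 1 :=
        fun i hi1 hi2 => hC i hi1 (by omega)
      have IH := (ih a b' C (by omega) hC').2
      set C1 : Fin n → ℕ :=
        (fun i => if i = a then ℓ + 1 else if a.val ≤ i.val ∧ i.val ≤ b'.val then 0 else C i)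
        with hC1
      have hab' : a ≠ b := fun h => absurd (congrArg Fin.val h) (by omega)
      have hCb : C1 b = 1 := by
        rw [hC1]
        beta_reduce
        rw [if_neg (fun h => hab' h.symm), if_neg (by omega : ¬(a.val ≤ b.val ∧ b.val ≤ b'.val))]
        exact hC b (by omega) le_rfl
      have hCa : C1 a = ℓ + 1 := by rw [hC1]; beta_reduce; rw [if_pos rfl]
      refine Relation.ReflTransGen.tail IH ⟨a, b, hab', by omega, by omega, ?_, ?_⟩
      · rw [pathGraph_dist, Nat.dist_eq_sub_of_le (by omega : a.val ≤ b.val), hCa]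
        omega
      · intro w
        beta_reduce
        by_cases hwa : w = a
        · have hwb : w ≠ b := fun h => hab' (hwa ▸ h)
          rw [if_pos hwa, if_neg hwb]
          have hv : w.val = a.val := congrArg Fin.val hwa
          rw [if_pos (by omega : a.val ≤ w.val ∧ w.val ≤ b.val)]
        · rw [if_neg hwa]
          by_cases hwb : w = b
          · rw [if_pos hwb, if_pos hwb, hCa, hCb]
          · rw [if_neg hwb, if_neg hwb, hC1]
            beta_reduce
            rw [if_neg hwa]
            have hva : w.val ≠ a.val := fun h => hwa (Fin.ext h)
            have hvb : w.val ≠ b.val := fun h => hwb (Fin.ext h)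
            by_cases hin : a.val ≤ w.val ∧ w.val ≤ b.val
            · rw [if_pos hin, if_pos (by omega : a.val ≤ w.val ∧ w.val ≤ b'.val)]
            · rw [if_neg hin, if_neg (by omega : ¬(a.val ≤ w.val ∧ w.val ≤ b'.val))]
    · -- stack at the left endpoint a
      obtain ⟨a', ha'⟩ : ∃ a' : Fin n, a'.val = a.val + 1 := ⟨⟨a.val + 1, by omega⟩, rfl⟩
      have hC' : ∀ i : Fin n, a'.val ≤ i.val → i.val ≤ b.val → C i = 1 :=
        fun i hi1 hi2 => hC i (by omega) hi2
      have IH := (ih a' b C (by omega) hC').1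
      set C1 : Fin n → ℕ :=
        (fun i => if i = b then ℓ + 1 else if a'.val ≤ i.val ∧ i.val ≤ b.val then 0 else C i)
        with hC1
      have hab' : b ≠ a := fun h => absurd (congrArg Fin.val h) (by omega)
      have hCa : C1 a = 1 := by
        rw [hC1]
        beta_reduce
        rw [if_neg (fun h => hab' h.symm), if_neg (by omega : ¬(a'.val ≤ a.val ∧ a.val ≤ b.val))]
        exact hC a le_rfl (by omega)
      have hCb : C1 b = ℓ + 1 := by rw [hC1]; beta_reduce; rw [if_pos rfl]
      refine Relation.ReflTransGen.tail IH ⟨b, a, hab', by omega, by omega, ?_, ?_⟩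
      · rw [pathGraph_dist, Nat.dist_comm,
          Nat.dist_eq_sub_of_le (by omega : a.val ≤ b.val), hCb]
        omega
      · intro w
        beta_reduce
        by_cases hwb : w = b
        · have hwa : w ≠ a := fun h => hab' (hwb ▸ h)
          rw [if_neg hwa, if_pos hwb]
          have hv : w.val = b.val := congrArg Fin.val hwb
          rw [if_pos (by omega : a.val ≤ w.val ∧ w.val ≤ b.val)]
        · rw [if_neg hwb]
          by_cases hwa : w = a
          · rw [if_pos hwa, if_pos hwa, hCa, hCb]
          · rw [if_neg hwa, if_neg hwa, hC1]
            beta_reduce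
            rw [if_neg hwb]
            have hva : w.val ≠ a.val := fun h => hwa (Fin.ext h)
            have hvb : w.val ≠ b.val := fun h => hwb (Fin.ext h)
            by_cases hin : a.val ≤ w.val ∧ w.val ≤ b.val
            · rw [if_pos hin, if_pos (by omega : a'.val ≤ w.val ∧ w.val ≤ b.val)]
            · rw [if_neg hin, if_neg (by omega : ¬(a'.val ≤ w.val ∧ w.val ≤ b.val))]

lemma phaseL (n : ℕ) (r : Fin n) (C : Fin n → ℕ)
    (h1 : ∀ i : Fin n, i.val ≤ r.val → C i = 1) :
    Relation.ReflTransGen (CupMove (pathGraph n)) C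
      (fun w => if w = r then r.val + 1 else if w.val ≤ r.val then 0 else C w) := by
  rcases Nat.eq_zero_or_pos r.val with hr | hr
  · have key : (fun w => if w = r then r.val + 1 else if w.val ≤ r.val then 0 else C w) = C := by
      funext w
      by_cases h : w = r
      · have hv : w.val = r.val := congrArg Fin.val h
        rw [if_pos h, h1 w (by omega)]
        omega
      · have hv : w.val ≠ r.val := fun hh => h (Fin.ext hh)
        rw [if_neg h, if_neg (by omega : ¬ w.val ≤ r.val)]
    rw [key]
  · have hrn : r.val < n := r.isLt
    obtain ⟨a, ha⟩ : ∃ a : Fin n, a.val = 0 := ⟨⟨0, by omega⟩, rfl⟩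
    obtain ⟨b, hb⟩ : ∃ b : Fin n, b.val = r.val - 1 := ⟨⟨r.val - 1, by omega⟩, rfl⟩
    have hC' : ∀ i : Fin n, a.val ≤ i.val → i.val ≤ b.val → C i = 1 :=
      fun i _ h2 => h1 i (by omega)
    have IH := (seg_stack n (r.val - 1) a b C (by omega) hC').2
    set C1 : Fin n → ℕ :=
      (fun i => if i = a then r.val - 1 + 1 else if a.val ≤ i.val ∧ i.val ≤ b.val then 0 else C i)
      with hC1
    have har : a ≠ r := fun h => absurd (congrArg Fin.val h) (by omega)
    have hCa : C1 a = r.val := by rw [hC1]; beta_reduce; rw [if_pos rfl]; omega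
    have hCr : C1 r = 1 := by
      rw [hC1]; beta_reduce
      rw [if_neg (fun h => har h.symm), if_neg (by omega : ¬(a.val ≤ r.val ∧ r.val ≤ b.val))]
      exact h1 r le_rfl
    refine Relation.ReflTransGen.tail IH ⟨a, r, har, by omega, by omega, ?_, ?_⟩
    · rw [pathGraph_dist, Nat.dist_eq_sub_of_le (by omega : a.val ≤ r.val), hCa]
      omega
    · intro w
      beta_reduce
      by_cases hwa : w = a
      · have hwr : w ≠ r := fun h => har (hwa ▸ h)
        have hv : w.val = a.val := congrArg Fin.val hwa
        rw [if_pos hwa, if_neg hwr, if_pos (by omega : w.val ≤ r.val)]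
      · rw [if_neg hwa]
        by_cases hwr : w = r
        · rw [if_pos hwr, if_pos hwr, hCa, hCr]
        · rw [if_neg hwr, if_neg hwr, hC1]
          beta_reduce
          rw [if_neg hwa]
          have hva : w.val ≠ a.val := fun h => hwa (Fin.ext h)
          have hvr : w.val ≠ r.val := fun h => hwr (Fin.ext h)
          by_cases hin : w.val ≤ r.val
          · rw [if_pos hin, if_pos (by omega : a.val ≤ w.val ∧ w.val ≤ b.val)]
          · rw [if_neg hin, if_neg (by omega : ¬(a.val ≤ w.val ∧ w.val ≤ b.val))]

lemma phaseR (n : ℕ) (r : Fin n) (C : Fin n → ℕ)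
    (h1 : ∀ i : Fin n, r.val < i.val → C i = 1) (h2 : 1 ≤ C r) :
    Relation.ReflTransGen (CupMove (pathGraph n)) C
      (fun w => if w = r then (n - 1 - r.val) + C r else if r.val < w.val then 0 else C w) := by
  have hrn : r.val < n := r.isLt
  rcases Nat.lt_or_ge r.val (n - 1) with hr | hr
  · obtain ⟨a, ha⟩ : ∃ a : Fin n, a.val = r.val + 1 := ⟨⟨r.val + 1, by omega⟩, rfl⟩
    obtain ⟨b, hb⟩ : ∃ b : Fin n, b.val = n - 1 := ⟨⟨n - 1, by omega⟩, rfl⟩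
    have hC' : ∀ i : Fin n, a.val ≤ i.val → i.val ≤ b.val → C i = 1 :=
      fun i hi _ => h1 i (by omega)
    have IH := (seg_stack n (n - 1 - r.val - 1) a b C (by omega) hC').1
    set C1 : Fin n → ℕ :=
      (fun i => if i = b then n - 1 - r.val - 1 + 1
        else if a.val ≤ i.val ∧ i.val ≤ b.val then 0 else C i) with hC1
    have hbr : b ≠ r := fun h => absurd (congrArg Fin.val h) (by omega)
    have hCb : C1 b = n - 1 - r.val := by rw [hC1]; beta_reduce; rw [if_pos rfl]; omega
    have hCr : C1 r = C r := by
      rw [hC1]; beta_reduce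
      rw [if_neg (fun h => hbr h.symm), if_neg (by omega : ¬(a.val ≤ r.val ∧ r.val ≤ b.val))]
    refine Relation.ReflTransGen.tail IH ⟨b, r, hbr, by omega, by omega, ?_, ?_⟩
    · rw [pathGraph_dist, Nat.dist_comm,
        Nat.dist_eq_sub_of_le (by omega : r.val ≤ b.val), hCb]
      omega
    · intro w
      beta_reduce
      have hwn : w.val < n := w.isLt
      by_cases hwb : w = b
      · have hwr : w ≠ r := fun h => hbr (hwb ▸ h)
        have hv : w.val = b.val := congrArg Fin.val hwb
        rw [if_pos hwb, if_neg hwr, if_pos (by omega : r.val < w.val)]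
      · rw [if_neg hwb]
        by_cases hwr : w = r
        · rw [if_pos hwr, if_pos hwr, hCb, hCr]
        · rw [if_neg hwr, if_neg hwr, hC1]
          beta_reduce
          rw [if_neg hwb]
          have hvb : w.val ≠ b.val := fun h => hwb (Fin.ext h)
          have hvr : w.val ≠ r.val := fun h => hwr (Fin.ext h)
          by_cases hin : r.val < w.val
          · rw [if_pos hin, if_pos (by omega : a.val ≤ w.val ∧ w.val ≤ b.val)]
          · rw [if_neg hin, if_neg (by omega : ¬(a.val ≤ w.val ∧ w.val ≤ b.val))]
  · have key : (fun w => if w = r then (n - 1 - r.val) + C r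
        else if r.val < w.val then 0 else C w) = C := by
      funext w
      have hwn : w.val < n := w.isLt
      by_cases h : w = r
      · have hv : w.val = r.val := congrArg Fin.val h
        rw [if_pos h, h]
        omega
      · have hv : w.val ≠ r.val := fun hh => h (Fin.ext hh)
        rw [if_neg h, if_neg (by omega : ¬ r.val < w.val)]
    rw [key]

theorem pathGraph_stackable' (n : ℕ) (hn : 1 ≤ n) (r : Fin n) :
    Relation.ReflTransGen (CupMove (SimpleGraph.pathGraph n)) (fun _ => 1)
      (fun w => if w = r then ∑ v : Fin n, (1 : ℕ) else 0) := by
  have hrn : r.val < n := r.isLt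
  have hsum : (∑ _v : Fin n, (1 : ℕ)) = n := by simp
  rw [hsum]
  have P1 := phaseL n r (fun _ => 1) (fun i _ => rfl)
  set C1 : Fin n → ℕ :=
    (fun w => if w = r then r.val + 1 else if w.val ≤ r.val then 0 else 1) with hC1
  have h1 : ∀ i : Fin n, r.val < i.val → C1 i = 1 := by
    intro i hi
    have hne : i ≠ r := fun h => absurd (congrArg Fin.val h) (by omega)
    rw [hC1]; beta_reduce
    rw [if_neg hne, if_neg (by omega : ¬ i.val ≤ r.val)]
  have hC1r : C1 r = r.val + 1 := by rw [hC1]; beta_reduce; rw [if_pos rfl]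
  have h2 : 1 ≤ C1 r := by omega
  have P2 := phaseR n r C1 h1 h2
  have key : (fun w => if w = r then (n - 1 - r.val) + C1 r
      else if r.val < w.val then 0 else C1 w) =
      (fun w => if w = r then n else 0) := by
    funext w
    by_cases h : w = r
    · rw [if_pos h, if_pos h, hC1r]
      omega
    · have hv : w.val ≠ r.val := fun hh => h (Fin.ext hh)
      rw [if_neg h, if_neg h]
      by_cases hin : r.val < w.val
      · rw [if_pos hin]
      · rw [if_neg hin, hC1]
        beta_reduce
        rw [if_neg h, if_pos (by omega : w.val ≤ r.val)]
  rw [key] at P2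
  exact Relation.ReflTransGen.trans P1 P2

theorem pathGraph_stackable (n : ℕ) (hn : 1 ≤ n) :
    IsStackable (SimpleGraph.pathGraph n) := by
  intro r
  exact pathGraph_stackable' n hn r
end

section
/- For every n ≥ 3, the cycle C_n on n vertices is stackable. -/
namespace CupStackAux

open SimpleGraph Relation
open Fin.NatCast Fin.CommRing

variable {n : ℕ}

lemma fin_add_cases [NeZero n] (x y : Fin n) :
    (x + y).val = x.val + y.val ∨ (x + y).val + n = x.val + y.val := by
  rw [Fin.add_def]
  rcases Nat.lt_or_ge (x.val + y.val) n with h | h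
  · left; simp [Nat.mod_eq_of_lt h]
  · right
    have hx := x.is_lt; have hy := y.is_lt
    simp only []
    rw [Nat.mod_eq_sub_mod h, Nat.mod_eq_of_lt (by omega)]
    omega

lemma fin_neg_cases [NeZero n] (x : Fin n) :
    (x.val = 0 ∧ (-x).val = 0) ∨ x.val + (-x).val = n := by
  rw [Fin.neg_def]
  rcases eq_or_ne x.val 0 with h | h
  · left; simp [h]
  · right; have := x.is_lt; simp only []; rw [Nat.mod_eq_of_lt (by omega)]; omega

lemma cyc_connected (h : 3 ≤ n) : (cycleGraph n).Connected := by
  obtain ⟨m, rfl⟩ : ∃ m, n = m + 1 := ⟨n - 1, by omega⟩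
  exact cycleGraph_connected

lemma dist_le_offset [NeZero n] (h3 : 3 ≤ n) (u : Fin n) (k : ℕ) :
    (cycleGraph n).dist u (u + (k : Fin n)) ≤ k := by
  induction k with
  | zero => simp
  | succ k ih =>
    have hadj : (cycleGraph n).Adj (u + (k : Fin n)) (u + ((k + 1 : ℕ) : Fin n)) := by
      rw [cycleGraph_adj']
      right
      have h1 : u + ((k + 1 : ℕ) : Fin n) - (u + (k : Fin n)) = ((1 : ℕ) : Fin n) := by
        push_cast; ring
      rw [h1, Fin.val_natCast, Nat.mod_eq_of_lt (by omega)]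
    have hd1 : (cycleGraph n).dist (u + (k : Fin n)) (u + ((k + 1 : ℕ) : Fin n)) = 1 :=
      dist_eq_one_iff_adj.mpr hadj
    have htri := (cyc_connected h3).dist_triangle (u := u) (v := u + (k : Fin n))
      (w := u + ((k + 1 : ℕ) : Fin n))
    omega

lemma min_le_walk [NeZero n] {u v : Fin n} (p : (cycleGraph n).Walk u v) :
    min (v - u).val (u - v).val ≤ p.length := by
  induction p with
  | nil => simp
  | @cons u w v hadj p ih =>
    rw [cycleGraph_adj'] at hadj
    have e1 : (v - w) + (w - u) = v - u := by ring
    have e2 : -(v - u) = u - v := by ring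
    have e3 : -(v - w) = w - v := by ring
    have e4 : -(w - u) = u - w := by ring
    have a1 := fin_add_cases (v - w) (w - u)
    have a2 := fin_neg_cases (v - u)
    have a3 := fin_neg_cases (v - w)
    have a4 := fin_neg_cases (w - u)
    rw [e1] at a1
    rw [e2] at a2
    rw [e3] at a3
    rw [e4] at a4
    have b1 := (v - u).is_lt
    have b2 := (u - v).is_lt
    have b3 := (v - w).is_lt
    have b4 := (w - v).is_lt
    have b5 := (w - u).is_lt
    have b6 := (u - w).is_lt
    rw [Walk.length_cons]
    omega

lemma cyc_dist [NeZero n] (h3 : 3 ≤ n) (u v : Fin n) :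
    (cycleGraph n).dist u v = min (v - u).val (u - v).val := by
  refine le_antisymm (le_min ?_ ?_) ?_
  · have hv : u + (((v - u).val : ℕ) : Fin n) = v := by
      rw [Fin.cast_val_eq_self]; ring
    conv_lhs => rw [← hv]
    exact dist_le_offset h3 u _
  · rw [SimpleGraph.dist_comm]
    have hv : v + (((u - v).val : ℕ) : Fin n) = u := by
      rw [Fin.cast_val_eq_self]; ring
    conv_lhs => rw [← hv]
    exact dist_le_offset h3 v _
  · rcases eq_or_ne u v with rfl | hne
    · simp
    · have hdne : (cycleGraph n).dist u v ≠ 0 := by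
        rw [SimpleGraph.dist_ne_zero_iff_ne_and_reachable]
        exact ⟨hne, (cyc_connected h3).preconnected u v⟩
      obtain ⟨p, hp⟩ := SimpleGraph.exists_walk_of_dist_ne_zero hdne
      rw [← hp]
      exact min_le_walk p

lemma offset_val [NeZero n] (r : Fin n) {i : ℕ} (hi : i < n) :
    ((r + (i : Fin n)) - r).val = i := by
  have h : r + (i : Fin n) - r = (i : Fin n) := by ring
  rw [h, Fin.val_natCast, Nat.mod_eq_of_lt hi]

lemma eq_offset [NeZero n] (r w : Fin n) {i : ℕ} (hi : i < n) :
    w = r + (i : Fin n) ↔ (w - r).val = i := by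
  constructor
  · rintro rfl; exact offset_val r hi
  · intro h
    have h2 : ((i : ℕ) : Fin n) = w - r := by rw [← h, Fin.cast_val_eq_self]
    rw [h2]; ring

lemma eq_root [NeZero n] (r w : Fin n) : w = r ↔ (w - r).val = 0 := by
  rw [← sub_eq_zero, Fin.ext_iff]
  simp

lemma dist_offset [NeZero n] (h3 : 3 ≤ n) (r : Fin n) {i j : ℕ} (hij : i ≤ j) (hj : j < n) :
    (cycleGraph n).dist (r + (i : Fin n)) (r + (j : Fin n)) = min (j - i) (n - (j - i)) := by
  have hc : ((j - i : ℕ) : Fin n) = (j : Fin n) - (i : Fin n) := Nat.cast_sub hij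
  have h1 : (r + (j : Fin n)) - (r + (i : Fin n)) = ((j - i : ℕ) : Fin n) := by rw [hc]; ring
  have h2 : (r + (i : Fin n)) - (r + (j : Fin n)) = -((j - i : ℕ) : Fin n) := by rw [hc]; ring
  rw [cyc_dist h3, h1, h2]
  have hv : ((j - i : ℕ) : Fin n).val = j - i := by
    rw [Fin.val_natCast, Nat.mod_eq_of_lt (by omega)]
  have hneg := fin_neg_cases ((j - i : ℕ) : Fin n)
  omega

lemma move_step {C : Fin n → ℕ} {u v : Fin n} (huv : u ≠ v) (hu : 1 ≤ C u) (hv : 1 ≤ C v)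
    (hd : (cycleGraph n).dist u v = C u) :
    CupMove (cycleGraph n) C (fun w => if w = u then 0 else if w = v then C u + C v else C w) :=
  ⟨u, v, huv, hu, hv, hd, fun _ => rfl⟩

lemma rtg_cast {α : Type*} {M : α → α → Prop} {A B B' : α}
    (h : Relation.ReflTransGen M A B) (e : B = B') : Relation.ReflTransGen M A B' := e ▸ h

/-- Gathering a block of `b` consecutive vertices, each holding one cup, into a single
stack at either the left end (first component) or the right end (second component). -/
lemma gather [NeZero n] (h3 : 3 ≤ n) :
    ∀ b : ℕ, 1 ≤ b → ∀ (o : ℕ) (r : Fin n) (C : Fin n → ℕ),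
      o + b ≤ n → 2 * (b - 1) ≤ n →
      (∀ w : Fin n, o ≤ (w - r).val → (w - r).val < o + b → C w = 1) →
      Relation.ReflTransGen (CupMove (cycleGraph n)) C
        (fun w => if (w - r).val = o then b
          else if o ≤ (w - r).val ∧ (w - r).val < o + b then 0 else C w) ∧
      Relation.ReflTransGen (CupMove (cycleGraph n)) C
        (fun w => if (w - r).val = o + b - 1 then b
          else if o ≤ (w - r).val ∧ (w - r).val < o + b then 0 else C w) := by
  intro b
  induction b with
  | zero => intro h; exact absurd h (by omega)
  | succ b ih =>
    intro _ o r C hob hhalf hones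
    rcases Nat.eq_zero_or_pos b with rfl | hb1
    · -- block of size one: nothing to do
      have hEq : ∀ (e : ℕ), (fun w : Fin n => if (w - r).val = e + o - e then 1
          else if o ≤ (w - r).val ∧ (w - r).val < o + 1 then 0 else C w) = C := by
        intro e
        funext w
        have he : e + o - e = o := by omega
        rw [he]
        by_cases h1 : (w - r).val = o
        · rw [if_pos h1, hones w (by omega) (by omega)]
        · rw [if_neg h1, if_neg (by omega)]
      constructor
      · exact rtg_cast ReflTransGen.refl (by simpa using (hEq 0).symm)
      · exact rtg_cast ReflTransGen.refl (by simpa using (hEq 1).symm)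
    constructor
    · -- gather to the left end, offset o
      have hR := (ih hb1 (o + 1) r C (by omega) (by omega)
        (fun w h1 h2 => hones w (by omega) (by omega))).2
      set D := (fun w : Fin n => if (w - r).val = o + 1 + b - 1 then b
        else if o + 1 ≤ (w - r).val ∧ (w - r).val < o + 1 + b then 0 else C w) with hD
      have hku : ((r + ((o + b : ℕ) : Fin n)) - r).val = o + b := offset_val r (by omega)
      have hkv : ((r + ((o : ℕ) : Fin n)) - r).val = o := offset_val r (by omega)
      have hDu : D (r + ((o + b : ℕ) : Fin n)) = b := by
        rw [hD]; simp only []; rw [hku, if_pos (by omega)]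
      have hDv : D (r + ((o : ℕ) : Fin n)) = 1 := by
        rw [hD]; simp only []; rw [hkv, if_neg (by omega), if_neg (by omega)]
        exact hones _ (by omega) (by omega)
      have huv : r + ((o + b : ℕ) : Fin n) ≠ r + ((o : ℕ) : Fin n) := by
        intro h
        rw [h, hkv] at hku; omega
      have hdist : (cycleGraph n).dist (r + ((o + b : ℕ) : Fin n)) (r + ((o : ℕ) : Fin n))
          = D (r + ((o + b : ℕ) : Fin n)) := by
        rw [hDu, SimpleGraph.dist_comm,
          dist_offset h3 r (show o ≤ o + b by omega) (show o + b < n by omega)]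
        omega
      have hmv := move_step huv (by omega) (by omega) hdist
      refine rtg_cast (hR.tail hmv) ?_
      funext w
      have hk := (w - r).is_lt
      have hwu : w = r + ((o + b : ℕ) : Fin n) ↔ (w - r).val = o + b := eq_offset r w (by omega)
      have hwv : w = r + ((o : ℕ) : Fin n) ↔ (w - r).val = o := eq_offset r w (by omega)
      rw [hDu, hDv]
      simp only [hwu, hwv, hD]
      by_cases h1 : (w - r).val = o + b
      · rw [if_pos h1, if_neg (by omega), if_pos (by omega)]
      · rw [if_neg h1]
        by_cases h2 : (w - r).val = o
        · rw [if_pos h2, if_pos h2]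
        · rw [if_neg h2, if_neg h2, if_neg (by omega)]
          by_cases h4 : o + 1 ≤ (w - r).val ∧ (w - r).val < o + 1 + b
          · rw [if_pos h4, if_pos (by omega)]
          · rw [if_neg h4, if_neg (by omega)]
    · -- gather to the right end, offset o + b
      have hL := (ih hb1 o r C (by omega) (by omega)
        (fun w h1 h2 => hones w (by omega) (by omega))).1
      set D := (fun w : Fin n => if (w - r).val = o then b
        else if o ≤ (w - r).val ∧ (w - r).val < o + b then 0 else C w) with hD
      have hku : ((r + ((o : ℕ) : Fin n)) - r).val = o := offset_val r (by omega)
      have hkv : ((r + ((o + b : ℕ) : Fin n)) - r).val = o + b := offset_val r (by omega)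
      have hDu : D (r + ((o : ℕ) : Fin n)) = b := by
        rw [hD]; simp only []; rw [hku, if_pos rfl]
      have hDv : D (r + ((o + b : ℕ) : Fin n)) = 1 := by
        rw [hD]; simp only []; rw [hkv, if_neg (by omega), if_neg (by omega)]
        exact hones _ (by omega) (by omega)
      have huv : r + ((o : ℕ) : Fin n) ≠ r + ((o + b : ℕ) : Fin n) := by
        intro h
        rw [h, hkv] at hku; omega
      have hdist : (cycleGraph n).dist (r + ((o : ℕ) : Fin n)) (r + ((o + b : ℕ) : Fin n))
          = D (r + ((o : ℕ) : Fin n)) := by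
        rw [hDu, dist_offset h3 r (show o ≤ o + b by omega) (show o + b < n by omega)]
        omega
      have hmv := move_step huv (by omega) (by omega) hdist
      refine rtg_cast (hL.tail hmv) ?_
      funext w
      have hk := (w - r).is_lt
      have hwu : w = r + ((o : ℕ) : Fin n) ↔ (w - r).val = o := eq_offset r w (by omega)
      have hwv : w = r + ((o + b : ℕ) : Fin n) ↔ (w - r).val = o + b := eq_offset r w (by omega)
      rw [hDu, hDv]
      simp only [hwu, hwv, hD]
      split_ifs <;> first | rfl | omega

end CupStackAux

open Fin.NatCast Fin.CommRing

theorem cycleGraph_stackable (n : ℕ) (hn : 3 ≤ n) :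
    IsStackable (SimpleGraph.cycleGraph n) := by
  haveI : NeZero n := ⟨by omega⟩
  open CupStackAux in
  intro r
  unfold IsStackableAt IsStackableConf
  have hgoal : (fun w : Fin n => if w = r then (∑ v : Fin n, (fun _ : Fin n => (1 : ℕ)) v) else 0)
      = (fun w : Fin n => if (w - r).val = 0 then n else 0) := by
    funext w
    simp only [Finset.sum_const, Finset.card_univ, Fintype.card_fin, smul_eq_mul, mul_one,
      CupStackAux.eq_root r w]
  rw [hgoal]
  set s := n / 2 with hs
  set a := n + 1 - 2 * s with ha
  have hna : n = a + 2 * s - 1 := by omega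
  have ha1 : 1 ≤ a := by omega
  have ha2 : a ≤ 2 := by omega
  have hs1 : 1 ≤ s := by omega
  -- Stage 1: gather the block of offsets [0, a) to a stack of size a at the root.
  have h1 := (CupStackAux.gather hn a ha1 0 r (fun _ => 1) (by omega) (by omega)
    (fun _ _ _ => rfl)).1
  have h1' : Relation.ReflTransGen (CupMove (SimpleGraph.cycleGraph n)) (fun _ => 1)
      (fun w : Fin n => if (w - r).val = 0 then a else if (w - r).val < a then 0 else 1) := by
    refine CupStackAux.rtg_cast h1 ?_
    funext w
    split_ifs <;> first | rfl | omega
  set C1 := (fun w : Fin n => if (w - r).val = 0 then a else if (w - r).val < a then 0 else 1)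
    with hC1
  -- Stage 2: gather the block of offsets [a, a+s) to a stack of size s at offset a+s-1.
  have h2 := (CupStackAux.gather hn s hs1 a r C1 (by omega) (by omega)
    (fun w hw1 hw2 => by rw [hC1]; simp only []; rw [if_neg (by omega), if_neg (by omega)])).2
  set C2 := (fun w : Fin n => if (w - r).val = a + s - 1 then s
      else if (w - r).val = 0 then a else if (w - r).val < a + s then 0 else 1) with hC2
  have h2' : Relation.ReflTransGen (CupMove (SimpleGraph.cycleGraph n)) C1 C2 := by
    refine CupStackAux.rtg_cast h2 ?_
    funext w
    rw [hC1, hC2]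
    simp only []
    split_ifs <;> first | rfl | omega
  -- Stage 3: move the stack of size s from offset a+s-1 onto the root.
  have hku : ((r + ((a + s - 1 : ℕ) : Fin n)) - r).val = a + s - 1 :=
    CupStackAux.offset_val r (by omega)
  have hC2u : C2 (r + ((a + s - 1 : ℕ) : Fin n)) = s := by
    rw [hC2]; simp only []; rw [hku, if_pos rfl]
  have hC2r : C2 r = a := by
    rw [hC2]; simp only []
    rw [sub_self]
    simp only [Fin.val_zero]
    split_ifs <;> omega
  have huv : r + ((a + s - 1 : ℕ) : Fin n) ≠ r := by
    intro h
    rw [(CupStackAux.eq_root r _).mp h] at hku; omega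
  have hr0 : r = r + ((0 : ℕ) : Fin n) := by simp
  have hdist : (SimpleGraph.cycleGraph n).dist (r + ((a + s - 1 : ℕ) : Fin n)) r
      = C2 (r + ((a + s - 1 : ℕ) : Fin n)) := by
    have hd0 := CupStackAux.dist_offset hn r (show (0 : ℕ) ≤ a + s - 1 by omega)
      (show a + s - 1 < n by omega)
    rw [show r + ((0 : ℕ) : Fin n) = r by simp] at hd0
    rw [hC2u, SimpleGraph.dist_comm, hd0]
    omega
  have hmv := CupStackAux.move_step huv (by omega) (by rw [hC2r]; omega) hdist
  set C3 := (fun w : Fin n => if (w - r).val = 0 then a + s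
      else if (w - r).val < a + s then 0 else 1) with hC3
  have h3' : Relation.ReflTransGen (CupMove (SimpleGraph.cycleGraph n)) C1 C3 := by
    refine CupStackAux.rtg_cast (h2'.tail hmv) ?_
    funext w
    have hk := (w - r).is_lt
    have hwu : w = r + ((a + s - 1 : ℕ) : Fin n) ↔ (w - r).val = a + s - 1 :=
      CupStackAux.eq_offset r w (by omega)
    rw [hC2u, hC2r]
    simp only [hwu, CupStackAux.eq_root r w, hC2, hC3]
    split_ifs <;> first | rfl | omega
  rcases eq_or_lt_of_le hs1 with hs_eq | hs2
  · -- n = 3 case pattern: s = 1, everything is already at the root.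
    refine CupStackAux.rtg_cast (h1'.trans h3') ?_
    funext w
    have hk := (w - r).is_lt
    rw [hC3]
    simp only []
    split_ifs <;> omega
  -- Stage 4: gather the block of offsets [a+s, n) to a stack of size s-1 at offset a+s.
  have h4 := (CupStackAux.gather hn (s - 1) (by omega) (a + s) r C3 (by omega) (by omega)
    (fun w hw1 hw2 => by rw [hC3]; simp only []; rw [if_neg (by omega), if_neg (by omega)])).1
  set C4 := (fun w : Fin n => if (w - r).val = a + s then s - 1
      else if (w - r).val = 0 then a + s else 0) with hC4
  have h4' : Relation.ReflTransGen (CupMove (SimpleGraph.cycleGraph n)) C3 C4 := by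
    refine CupStackAux.rtg_cast h4 ?_
    funext w
    have hk := (w - r).is_lt
    rw [hC3, hC4]
    simp only []
    split_ifs <;> first | rfl | omega
  -- Stage 5: move the stack of size s-1 from offset a+s onto the root.
  have hku5 : ((r + ((a + s : ℕ) : Fin n)) - r).val = a + s :=
    CupStackAux.offset_val r (by omega)
  have hC4u : C4 (r + ((a + s : ℕ) : Fin n)) = s - 1 := by
    rw [hC4]; simp only []; rw [hku5, if_pos rfl]
  have hC4r : C4 r = a + s := by
    rw [hC4]; simp only []
    rw [sub_self]
    simp only [Fin.val_zero]
    split_ifs <;> omega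
  have huv5 : r + ((a + s : ℕ) : Fin n) ≠ r := by
    intro h
    rw [(CupStackAux.eq_root r _).mp h] at hku5; omega
  have hdist5 : (SimpleGraph.cycleGraph n).dist (r + ((a + s : ℕ) : Fin n)) r
      = C4 (r + ((a + s : ℕ) : Fin n)) := by
    have hd0 := CupStackAux.dist_offset hn r (show (0 : ℕ) ≤ a + s by omega)
      (show a + s < n by omega)
    rw [show r + ((0 : ℕ) : Fin n) = r by simp] at hd0
    rw [hC4u, SimpleGraph.dist_comm, hd0]
    omega
  have hmv5 := CupStackAux.move_step huv5 (by rw [hC4u]; omega) (by rw [hC4r]; omega) hdist5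
  refine CupStackAux.rtg_cast ((h1'.trans (h3'.trans h4')).tail hmv5) ?_
  funext w
  have hk := (w - r).is_lt
  have hwu : w = r + ((a + s : ℕ) : Fin n) ↔ (w - r).val = a + s :=
    CupStackAux.eq_offset r w (by omega)
  rw [hC4u, hC4r]
  simp only [hwu, CupStackAux.eq_root r w, hC4]
  split_ifs <;> omega
end

section
/- Let T be a finite tree and r a vertex of T such that every vertex of T other than r has degree at most 2 (that is, T is a spider rooted at r: the union of paths emanating from r, including the case of a path). Then T is r-stackable. -/
set_option linter.unusedSectionVars false

section Aux

variable {V : Type*} [DecidableEq V] {G : SimpleGraph V}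

lemma cupMove_step (u v : V) (C : V → ℕ) (huv : u ≠ v) (hu : 1 ≤ C u) (hv : 1 ≤ C v)
    (hd : G.dist u v = C u) :
    CupMove G C (fun w => if w = u then 0 else if w = v then C u + C v else C w) :=
  ⟨u, v, huv, hu, hv, hd, fun _ => rfl⟩

lemma dist_le_of_chain (hconn : G.Connected) (x : ℕ → V) (m : ℕ)
    (hadj : ∀ k, k < m → G.Adj (x k) (x (k + 1))) :
    ∀ i j, i ≤ j → j ≤ m → G.dist (x i) (x j) ≤ j - i := by
  intro i j
  induction j with
  | zero => intro hij _; interval_cases i; simp [SimpleGraph.dist_self]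
  | succ j IH =>
    intro hij hjm
    rcases Nat.eq_or_lt_of_le hij with h | h
    · subst h; simp [SimpleGraph.dist_self]
    · have h1 : G.dist (x i) (x (j + 1)) ≤ G.dist (x i) (x j) + G.dist (x j) (x (j + 1)) :=
        hconn.dist_triangle
      have h2 : G.dist (x j) (x (j + 1)) = 1 :=
        SimpleGraph.dist_eq_one_iff_adj.mpr (hadj j (by omega))
      have h3 := IH (by omega) (by omega)
      omega

lemma exists_adj_dist_lt (hconn : G.Connected) {v r : V} (h : G.dist v r ≠ 0) :
    ∃ u, G.Adj v u ∧ G.dist u r = G.dist v r - 1 := by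
  obtain ⟨p, hp⟩ := (hconn v r).exists_walk_length_eq_dist
  cases p with
  | nil => simp at h
  | @cons _ u _ hadj q =>
    refine ⟨u, hadj, ?_⟩
    have h1 : G.dist u r ≤ q.length := SimpleGraph.dist_le q
    have h2 : G.dist v r ≤ G.dist v u + G.dist u r := hconn.dist_triangle
    have h3 : G.dist v u = 1 := SimpleGraph.dist_eq_one_iff_adj.mpr hadj
    simp only [SimpleGraph.Walk.length_cons] at hp
    omega

/-- Zig-zag lemma: `n+1` single cups on an isometric chain `y 0, …, y n` can all be
stacked on `y n`. -/
lemma zig :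
    ∀ (n : ℕ) (y : ℕ → V) (C : V → ℕ),
      (∀ i j, i ≤ j → j ≤ n → G.dist (y i) (y j) = j - i) →
      (∀ i, i ≤ n → C (y i) = 1) →
      Relation.ReflTransGen (CupMove G) C
        (fun w => if w = y n then n + 1
          else if w ∈ (Finset.range n).image y then 0 else C w) := by
  intro n
  induction n with
  | zero =>
    intro y C hdist hC
    have : (fun w => if w = y 0 then 0 + 1
        else if w ∈ (Finset.range 0).image y then 0 else C w) = C := by
      funext w
      by_cases h : w = y 0 <;> simp [h, hC 0 le_rfl]
    rw [this]
  | succ n IH =>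
    intro y C hdist hC
    have hne : ∀ i j, i < j → j ≤ n + 1 → y i ≠ y j := by
      intro i j hij hj h
      have := hdist i j hij.le hj
      rw [h, SimpleGraph.dist_self] at this
      omega
    set z : ℕ → V := fun i => y (n - i) with hz
    have hdz : ∀ i j, i ≤ j → j ≤ n → G.dist (z i) (z j) = j - i := by
      intro i j hij hj
      have h1 : G.dist (y (n - j)) (y (n - i)) = (n - i) - (n - j) :=
        hdist _ _ (by omega) (by omega)
      have : G.dist (z i) (z j) = G.dist (y (n - j)) (y (n - i)) := by
        simp only [hz, SimpleGraph.dist_comm]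
      rw [this, h1]
      omega
    have hCz : ∀ i, i ≤ n → C (z i) = 1 := fun i hi => hC _ (by omega)
    have h1 := IH z C hdz hCz
    set D1 : V → ℕ := fun w => if w = z n then n + 1
      else if w ∈ (Finset.range n).image z then 0 else C w with hD1
    have hzn : z n = y 0 := by simp [hz]
    have hmemz : ∀ w, w ∈ (Finset.range n).image z ↔ ∃ i, 1 ≤ i ∧ i ≤ n ∧ w = y i := by
      intro w
      simp only [Finset.mem_image, Finset.mem_range, hz]
      constructor
      · rintro ⟨i, hi, rfl⟩; exact ⟨n - i, by omega, by omega, rfl⟩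
      · rintro ⟨i, hi1, hi2, rfl⟩; exact ⟨n - i, by omega, by rw [show n - (n - i) = i by omega]⟩
    have hD1u : D1 (y 0) = n + 1 := by rw [hD1]; simp [← hzn]
    have hyknz : ∀ i, i ≤ n → y (n + 1) ≠ y i := fun i hi => (hne i (n + 1) (by omega) le_rfl).symm
    have hD1v : D1 (y (n + 1)) = 1 := by
      rw [hD1]
      simp only
      rw [if_neg (by rw [hzn]; exact hyknz 0 (by omega)),
        if_neg (by rw [hmemz]; rintro ⟨i, hi1, hi2, h⟩; exact hyknz i hi2 h), hC _ le_rfl]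
    have hmove : CupMove G D1 (fun w => if w = y 0 then 0
        else if w = y (n + 1) then D1 (y 0) + D1 (y (n + 1)) else D1 w) :=
      cupMove_step _ _ _ (hne 0 (n + 1) (by omega) le_rfl) (by omega) (by omega)
        (by rw [hD1u]; have := hdist 0 (n + 1) (by omega) le_rfl; omega)
    have hfinal : (fun w => if w = y 0 then 0
        else if w = y (n + 1) then D1 (y 0) + D1 (y (n + 1)) else D1 w)
        = (fun w => if w = y (n + 1) then n + 1 + 1
          else if w ∈ (Finset.range (n + 1)).image y then 0 else C w) := by
      funext w
      by_cases hk : w = y (n + 1)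
      · subst hk
        rw [if_neg (hyknz 0 (by omega)), if_pos rfl, if_pos rfl, hD1u, hD1v]
      · rw [if_neg hk]
        by_cases h0 : w = y 0
        · subst h0
          rw [if_pos rfl, if_neg hk,
            if_pos (Finset.mem_image.mpr ⟨0, Finset.mem_range.mpr (by omega), rfl⟩)]
        · rw [if_neg h0]
          by_cases hm : w ∈ (Finset.range n).image z
          · obtain ⟨i, hi1, hi2, rfl⟩ := (hmemz w).mp hm
            rw [hD1]
            simp only
            rw [if_neg (by rw [hzn]; exact fun h => h0 h), if_pos hm, if_neg hk,
              if_pos (Finset.mem_image.mpr ⟨i, Finset.mem_range.mpr (by omega), rfl⟩)]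
          · have hwim : w ∉ (Finset.range (n + 1)).image y := by
              rw [Finset.mem_image]
              rintro ⟨i, hi, rfl⟩
              rw [Finset.mem_range] at hi
              rcases Nat.eq_zero_or_pos i with h | h
              · exact h0 (by rw [h])
              · exact hm ((hmemz _).mpr ⟨i, h, by omega, rfl⟩)
            rw [if_neg hk, if_neg hwim, hD1]
            simp only
            rw [if_neg (by rw [hzn]; exact h0), if_neg hm]
    rw [← hfinal]
    exact h1.tail hmove

/-- Leg lemma: single cups on the chain `x 1, …, x d` (where `dist (x i) r = i`)
can all be moved onto `r`. -/
lemma leg (hconn : G.Connected) (r : V) (d : ℕ) (hd : 1 ≤ d) (x : ℕ → V)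
    (hdistr : ∀ i, i ≤ d → G.dist (x i) r = i)
    (hadj : ∀ i, i < d → G.Adj (x i) (x (i + 1)))
    (C : V → ℕ) (hC : ∀ i, 1 ≤ i → i ≤ d → C (x i) = 1) (hCr : 1 ≤ C r) :
    Relation.ReflTransGen (CupMove G) C
      (fun w => if w = r then C r + d
        else if w ∈ (Finset.range d).image (fun i => x (i + 1)) then 0 else C w) := by
  have hpair : ∀ i j, i ≤ j → j ≤ d → G.dist (x i) (x j) = j - i := by
    intro i j hij hj
    have hub := dist_le_of_chain hconn x d hadj i j hij hj
    have hlb : G.dist (x j) r ≤ G.dist (x j) (x i) + G.dist (x i) r := hconn.dist_triangle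
    rw [hdistr j hj, hdistr i (le_trans hij hj), SimpleGraph.dist_comm] at hlb
    omega
  set y : ℕ → V := fun i => x (i + 1) with hy
  have hzig := zig (G := G) (d - 1) y C
    (fun i j hij hj => by
      have := hpair (i + 1) (j + 1) (by omega) (by omega)
      rw [hy]; simp only; rw [this]; omega)
    (fun i hi => hC (i + 1) (by omega) (by omega))
  set D1 : V → ℕ := fun w => if w = y (d - 1) then d - 1 + 1
    else if w ∈ (Finset.range (d - 1)).image y then 0 else C w with hD1
  have hyd : y (d - 1) = x d := by rw [hy]; simp only; congr 1; omega
  have hxne : ∀ i j, i ≤ d → j ≤ d → i ≠ j → x i ≠ x j := by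
    intro i j hi hj hij h
    have h1 := hdistr i hi
    have h2 := hdistr j hj
    rw [h] at h1; omega
  have hrx : ∀ i, 1 ≤ i → i ≤ d → r ≠ x i := by
    intro i h1 h2 h
    have := hdistr i h2
    rw [← h, SimpleGraph.dist_self] at this; omega
  have hrnotim : r ∉ (Finset.range (d - 1)).image y := by
    rw [Finset.mem_image]
    rintro ⟨i, hi, h⟩
    rw [Finset.mem_range] at hi
    exact hrx (i + 1) (by omega) (by omega) h.symm
  have hD1u : D1 (x d) = d := by
    rw [hD1]; simp only; rw [if_pos hyd.symm]; omega
  have hD1r : D1 r = C r := by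
    rw [hD1]; simp only
    rw [if_neg (by rw [hyd]; exact hrx d hd le_rfl), if_neg hrnotim]
  have hmove : CupMove G D1 (fun w => if w = x d then 0
      else if w = r then D1 (x d) + D1 r else D1 w) :=
    cupMove_step _ _ _ (hrx d hd le_rfl).symm (by omega) (by omega)
      (by rw [hD1u, hdistr d le_rfl])
  have hfinal : (fun w => if w = x d then 0
      else if w = r then D1 (x d) + D1 r else D1 w)
      = (fun w => if w = r then C r + d
        else if w ∈ (Finset.range d).image (fun i => x (i + 1)) then 0 else C w) := by
    funext w
    by_cases hwr : w = r
    · subst hwr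
      rw [if_neg (hrx d hd le_rfl), if_pos rfl, if_pos rfl, hD1u, hD1r]
      omega
    · simp only [if_neg hwr]
      by_cases hwm : w ∈ (Finset.range d).image (fun i => x (i + 1))
      · simp only [if_pos hwm]
        obtain ⟨i, hi, rfl⟩ := Finset.mem_image.mp hwm
        rw [Finset.mem_range] at hi
        by_cases hid : i + 1 = d
        · rw [if_pos (by rw [hid])]
        · rw [if_neg (hxne (i + 1) d (by omega) le_rfl hid), hD1]
          simp only
          rw [if_neg (by rw [hyd]; exact hxne (i + 1) d (by omega) le_rfl hid),
            if_pos (Finset.mem_image.mpr ⟨i, Finset.mem_range.mpr (by omega), rfl⟩)]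
      · have hwd : w ≠ x d := fun h => hwm (Finset.mem_image.mpr
          ⟨d - 1, Finset.mem_range.mpr (by omega), by rw [show d - 1 + 1 = d by omega, h]⟩)
        simp only [if_neg hwd, if_neg hwm, hD1]
        rw [if_neg (by rw [hyd]; exact hwd), if_neg (by
          rw [Finset.mem_image]
          rintro ⟨i, hi, h⟩
          rw [Finset.mem_range] at hi
          exact hwm (Finset.mem_image.mpr ⟨i, Finset.mem_range.mpr (by omega), h⟩))]
  rw [← hfinal]
  exact hzig.tail hmove

/-- Main induction: if `A` is a set of vertices not containing `r`, closed under
taking the step towards `r`, carrying one cup each (with `r` carrying at least one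
cup and everything else empty), then all cups can be stacked on `r`. -/
lemma main_induction [Fintype V] [DecidableRel G.Adj] (hconn : G.Connected) (r : V)
    (hdeg : ∀ v : V, v ≠ r → G.degree v ≤ 2) :
    ∀ (n : ℕ) (A : Finset V), A.card ≤ n → r ∉ A →
      (∀ a ∈ A, ∀ b, G.Adj a b → G.dist b r < G.dist a r → b = r ∨ b ∈ A) →
      ∀ C : V → ℕ, 1 ≤ C r → (∀ a ∈ A, C a = 1) → (∀ a, a ∉ A → a ≠ r → C a = 0) →
      Relation.ReflTransGen (CupMove G) C (fun w => if w = r then C r + A.card else 0) := by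
  intro n
  induction n with
  | zero =>
    intro A hcard hrA hclosed C hCr hC1 hC0
    have hA : A = ∅ := Finset.card_eq_zero.mp (by omega)
    subst hA
    have heq : (fun w => if w = r then C r + (∅ : Finset V).card else 0) = C := by
      funext w
      by_cases h : w = r
      · subst h; simp
      · rw [if_neg h, hC0 w (by simp) h]
    rw [heq]
  | succ n IH =>
    intro A hcard hrA hclosed C hCr hC1 hC0
    by_cases hA : A = ∅
    · subst hA
      have heq : (fun w => if w = r then C r + (∅ : Finset V).card else 0) = C := by
        funext w
        by_cases h : w = r
        · subst h; simp
        · rw [if_neg h, hC0 w (by simp) h]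
      rw [heq]
    · obtain ⟨v, hvA, hmax⟩ :=
        Finset.exists_max_image A (fun a => G.dist a r) (Finset.nonempty_iff_ne_empty.mpr hA)
      set d := G.dist v r with hdv
      have hvr : v ≠ r := fun h => hrA (h ▸ hvA)
      have hd1 : 1 ≤ d := hconn.pos_dist_of_ne hvr
      -- the chain from v down to r
      set g : ℕ → V := fun j => Nat.rec (motive := fun _ => V) v
        (fun _ u => if h : G.dist u r ≠ 0 then (exists_adj_dist_lt hconn h).choose else r) j
        with hgdef
      have hg0 : g 0 = v := rfl
      have hgs : ∀ j, g (j + 1) = if h : G.dist (g j) r ≠ 0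
          then (exists_adj_dist_lt hconn h).choose else r := fun j => rfl
      have hginv : ∀ j, j ≤ d → G.dist (g j) r = d - j := by
        intro j
        induction j with
        | zero => intro _; rw [hg0]; omega
        | succ j IHj =>
          intro hj
          have h1 := IHj (by omega)
          have h2 : G.dist (g j) r ≠ 0 := by omega
          rw [hgs j, dif_pos h2]
          have := (exists_adj_dist_lt hconn h2).choose_spec.2
          rw [this, h1]
          omega
      have hgadj : ∀ j, j < d → G.Adj (g j) (g (j + 1)) := by
        intro j hj
        have h1 := hginv j (by omega)
        have h2 : G.dist (g j) r ≠ 0 := by omega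
        rw [hgs j, dif_pos h2]
        exact (exists_adj_dist_lt hconn h2).choose_spec.1
      set x : ℕ → V := fun i => g (d - i) with hx
      have hxdist : ∀ i, i ≤ d → G.dist (x i) r = i := by
        intro i hi
        rw [hx]
        simp only
        rw [hginv (d - i) (by omega)]
        omega
      have hxadj : ∀ i, i < d → G.Adj (x i) (x (i + 1)) := by
        intro i hi
        have h := hgadj (d - i - 1) (by omega)
        rw [show d - i - 1 + 1 = d - i from by omega] at h
        rw [hx]
        simp only
        rw [show d - (i + 1) = d - i - 1 from by omega]
        exact h.symm
      have hx0 : x 0 = r := by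
        rw [hx]
        simp only [Nat.sub_zero]
        exact hconn.dist_eq_zero_iff.mp (by rw [hginv d le_rfl]; omega)
      have hxd : x d = v := by rw [hx]; simp only [Nat.sub_self]; exact hg0
      have hxne : ∀ i j, i ≤ d → j ≤ d → i ≠ j → x i ≠ x j := by
        intro i j hi hj hij h
        have h1 := hxdist i hi
        have h2 := hxdist j hj
        rw [h] at h1
        omega
      have hmemA : ∀ i, 1 ≤ i → i ≤ d → x i ∈ A := by
        have key : ∀ k, k ≤ d - 1 → x (d - k) ∈ A := by
          intro k
          induction k with
          | zero => intro _; rw [Nat.sub_zero, hxd]; exact hvA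
          | succ k IHk =>
            intro hk
            have h1 : x (d - k) ∈ A := IHk (by omega)
            have h2 : G.Adj (x (d - k - 1)) (x (d - k)) := by
              have h := hxadj (d - k - 1) (by omega)
              rw [show d - k - 1 + 1 = d - k from by omega] at h
              exact h
            have h3 := hclosed _ h1 _ h2.symm (by
              rw [hxdist _ (by omega), hxdist _ (by omega)]; omega)
            rcases h3 with h | h
            · exfalso
              have := hxdist (d - k - 1) (by omega)
              rw [h, SimpleGraph.dist_self] at this
              omega
            · rw [show d - (k + 1) = d - k - 1 from by omega]
              exact h
        intro i h1 h2
        have := key (d - i) (by omega)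
        rw [show d - (d - i) = i from by omega] at this
        exact this
      have hleg := leg hconn r d hd1 x hxdist hxadj C
        (fun i h1 h2 => hC1 _ (hmemA i h1 h2)) hCr
      set S : Finset V := (Finset.range d).image (fun i => x (i + 1)) with hS
      set D : V → ℕ := fun w => if w = r then C r + d else if w ∈ S then 0 else C w with hD
      have hSsub : S ⊆ A := by
        intro w hw
        obtain ⟨i, hi, rfl⟩ := Finset.mem_image.mp hw
        rw [Finset.mem_range] at hi
        exact hmemA (i + 1) (by omega) (by omega)
      have hScard : S.card = d := by
        rw [hS, Finset.card_image_of_injOn, Finset.card_range]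
        intro a ha b hb h
        rw [Finset.mem_coe, Finset.mem_range] at ha hb
        by_contra hab
        exact hxne (a + 1) (b + 1) (by omega) (by omega) (by omega) h
      have hdA : d ≤ A.card := hScard ▸ Finset.card_le_card hSsub
      set A' : Finset V := A \ S with hA'
      have hA'card : A'.card = A.card - d := by rw [hA', Finset.card_sdiff_of_subset hSsub, hScard]
      have hrA' : r ∉ A' := fun h => hrA (Finset.mem_sdiff.mp h).1
      have hclosed' : ∀ a ∈ A', ∀ b, G.Adj a b → G.dist b r < G.dist a r →
          b = r ∨ b ∈ A' := by
        intro a ha b hab hbd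
        obtain ⟨haA, haS⟩ := Finset.mem_sdiff.mp ha
        rcases hclosed a haA b hab hbd with h | h
        · exact Or.inl h
        by_cases hbS : b ∈ S
        case neg => exact Or.inr (Finset.mem_sdiff.mpr ⟨h, hbS⟩)
        exfalso
        obtain ⟨i, hi, rfl⟩ := Finset.mem_image.mp hbS
        rw [Finset.mem_range] at hi
        have hdb : G.dist (x (i + 1)) r = i + 1 := hxdist _ (by omega)
        have htri : G.dist a r ≤ G.dist a (x (i + 1)) + G.dist (x (i + 1)) r :=
          hconn.dist_triangle
        have hadj1 : G.dist a (x (i + 1)) = 1 := SimpleGraph.dist_eq_one_iff_adj.mpr hab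
        have hda : G.dist a r = i + 2 := by omega
        have hmaxa := hmax a haA
        have hi2 : i + 2 ≤ d := by rw [← hda, ← hdv] at *; omega
        by_cases hax : a = x (i + 2)
        · exact haS (by
            rw [hax]
            exact Finset.mem_image.mpr ⟨i + 1, Finset.mem_range.mpr (by omega), rfl⟩)
        · have hur : x (i + 1) ≠ r := by
            intro h
            rw [h, SimpleGraph.dist_self] at hdb
            omega
          have hdeg_u := hdeg (x (i + 1)) hur
          have hax' : a ≠ x i := by
            intro h
            rw [h, hxdist i (by omega)] at hda
            omega
          have hx2i : x (i + 2) ≠ x i := hxne (i + 2) i (by omega) (by omega) (by omega)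
          have hsub : ({a, x (i + 2), x i} : Finset V) ⊆ G.neighborFinset (x (i + 1)) := by
            intro w hw
            rw [Finset.mem_insert, Finset.mem_insert, Finset.mem_singleton] at hw
            rw [SimpleGraph.mem_neighborFinset]
            rcases hw with rfl | rfl | rfl
            · exact hab.symm
            · exact hxadj (i + 1) (by omega)
            · exact (hxadj i (by omega)).symm
          have hcard3 : ({a, x (i + 2), x i} : Finset V).card = 3 := by
            rw [Finset.card_insert_of_notMem (by
                rw [Finset.mem_insert, Finset.mem_singleton]
                rintro (h | h)
                · exact hax h
                · exact hax' h),
              Finset.card_insert_of_notMem (by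
                rw [Finset.mem_singleton]
                exact hx2i),
              Finset.card_singleton]
          have hle := Finset.card_le_card hsub
          rw [hcard3, G.card_neighborFinset_eq_degree] at hle
          omega
      have hDr : D r = C r + d := by rw [hD]; simp
      have hD1c : ∀ a ∈ A', D a = 1 := by
        intro a ha
        obtain ⟨haA, haS⟩ := Finset.mem_sdiff.mp ha
        have har : a ≠ r := fun h => hrA (h ▸ haA)
        rw [hD]
        simp only
        rw [if_neg har, if_neg haS]
        exact hC1 a haA
      have hD0c : ∀ a, a ∉ A' → a ≠ r → D a = 0 := by
        intro a ha har
        rw [hD]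
        simp only
        rw [if_neg har]
        by_cases haS : a ∈ S
        · rw [if_pos haS]
        · rw [if_neg haS]
          exact hC0 a (fun h => ha (Finset.mem_sdiff.mpr ⟨h, haS⟩)) har
      have hstep2 := IH A' (by omega) hrA' hclosed' D (by omega) hD1c hD0c
      have heq : (fun w => if w = r then D r + A'.card else 0)
          = (fun w => if w = r then C r + A.card else 0) := by
        funext w
        by_cases h : w = r
        · rw [if_pos h, if_pos h, hDr, hA'card]
          omega
        · rw [if_neg h, if_neg h]
      rw [← heq]
      exact hleg.trans hstep2

end Aux

theorem spider_stackable {V : Type*} [Fintype V] [DecidableEq V]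
    (T : SimpleGraph V) [DecidableRel T.Adj] (hT : T.IsTree) (r : V)
    (hdeg : ∀ v : V, v ≠ r → T.degree v ≤ 2) :
    IsStackableAt T r := by
  have hconn : T.Connected := hT.isConnected
  have hmain := main_induction hconn r hdeg (Finset.univ.erase r).card (Finset.univ.erase r)
    le_rfl (by simp)
    (fun a _ b _ _ => by
      by_cases h : b = r
      · exact Or.inl h
      · exact Or.inr (Finset.mem_erase.mpr ⟨h, Finset.mem_univ b⟩))
    (fun _ => 1) le_rfl (fun a _ => rfl)
    (fun a ha har => absurd (Finset.mem_erase.mpr ⟨har, Finset.mem_univ a⟩) ha)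
  have heq : (fun w => if w = r then (∑ _v : V, (1 : ℕ)) else 0)
      = (fun w => if w = r then 1 + (Finset.univ.erase r).card else 0) := by
    funext w
    by_cases h : w = r
    · rw [if_pos h, if_pos h, Finset.card_erase_of_mem (Finset.mem_univ r)]
      have h1 : 1 ≤ (Finset.univ : Finset V).card := Finset.card_pos.mpr ⟨r, Finset.mem_univ r⟩
      have hs : ∑ _v : V, (1 : ℕ) = (Finset.univ : Finset V).card := by simp
      omega
    · rw [if_neg h, if_neg h]
  unfold IsStackableAt IsStackableConf
  rw [heq]
  exact hmain
end
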